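/- Deterministic rates with smooth inner operator (monotone case): There is an absolute constant C > 0 such that the following holds. Let X ⊆ ℝ^n be nonempty compact convex with diameter D_X > 0, let F : ℝ^n → ℝ^n be monotone and L_F-Lipschitz on X (i.e., ‖F(x₁) − F(x₂)‖ ≤ L_F‖x₁ − x₂‖ on X), and let H : ℝ^n → ℝ^n be monotone on X with ‖H(x₁) − H(x₂)‖ ≤ L_H‖x₁ − x₂‖ + M_H and ‖H(x)‖ ≤ C_H on X; suppose the solution set X_F^* of VI(F, X) is nonempty. Fix an integer K ≥ 2, set η := K^{−1/2} and γ := D_X/(8D_X(L_F + ηL_H) + M_H) (assume the denominator is positive), and run deterministic R-OpEx with τ_k = θ_k = 1, η_k = η, γ_k = γ, producing x̄_K := (1/(K−1))·Σ_{k=1}^{K−1} x_{k+1}. Then Gap(x̄_K, H, X_F^*) ≤ C·D_X·(D_X L_F/K^{1/2} + D_X L_H/K + M_H/K^{1/2}) and Gap(x̄_K, F, X) ≤ C·D_X·(D_X L_F/K + D_X L_H/K^{3/2} + M_H/K + C_H/K^{1/2}). -/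

import Mathlib

open RealInnerProductSpace

/-- The gap function `Gap(x̃, G, S) = sup_{y ∈ S} ⟪G y, x̃ − y⟫`, valued in the
extended reals. -/
noncomputable def Gap {n : ℕ} (G : EuclideanSpace ℝ (Fin n) → EuclideanSpace ℝ (Fin n))
    (S : Set (EuclideanSpace ℝ (Fin n))) (xt : EuclideanSpace ℝ (Fin n)) : EReal :=
  ⨆ y ∈ S, ((⟪G y, xt - y⟫ : ℝ) : EReal)

/-- The solution set `X_F^*` of the variational inequality `VI(F, X)`. -/
def VISol {n : ℕ} (F : EuclideanSpace ℝ (Fin n) → EuclideanSpace ℝ (Fin n))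
    (X : Set (EuclideanSpace ℝ (Fin n))) : Set (EuclideanSpace ℝ (Fin n)) :=
  {x | x ∈ X ∧ ∀ y ∈ X, 0 ≤ ⟪F x, y - x⟫}

lemma prox_ineq {E : Type*} [NormedAddCommGroup E] [InnerProductSpace ℝ E]
    {X : Set E} (hX : Convex ℝ X) {γ : ℝ} (hγ : 0 < γ) (g xk : E) {a : E} (ha : a ∈ X)
    (hmin : ∀ z ∈ X, ⟪g, a⟫ + 1/(2*γ) * ‖a - xk‖^2 ≤ ⟪g, z⟫ + 1/(2*γ) * ‖z - xk‖^2) :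
    ∀ z ∈ X, ⟪g, a - z⟫ ≤ 1/(2*γ) * (‖z - xk‖^2 - ‖z - a‖^2 - ‖a - xk‖^2) := by
  intro z hz
  obtain ⟨w, hw⟩ : ∃ w, w = z - a := ⟨_, rfl⟩
  have hc : 0 ≤ ⟪g, w⟫ + γ⁻¹ * ⟪a - xk, w⟫ := by
    by_contra hneg
    push_neg at hneg
    obtain ⟨c, hcdef⟩ : ∃ c, c = ⟪g, w⟫ + γ⁻¹ * ⟪a - xk, w⟫ := ⟨_, rfl⟩
    rw [← hcdef] at hneg
    have hwne : w ≠ 0 := by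
      intro h
      rw [h] at hcdef
      simp [inner_zero_right] at hcdef
      rw [hcdef] at hneg; exact lt_irrefl 0 hneg
    have hwpos : 0 < ‖w‖^2 := by
      have := norm_pos_iff.mpr hwne
      positivity
    obtain ⟨l, hl⟩ : ∃ l, l = min 1 ((-c) * γ / ‖w‖^2) := ⟨_, rfl⟩
    have hlpos : 0 < l := by
      rw [hl]
      apply lt_min one_pos
      apply div_pos (mul_pos (by linarith) hγ) hwpos
    have hl1 : l ≤ 1 := hl ▸ min_le_left _ _
    have hl2 : l ≤ (-c) * γ / ‖w‖^2 := hl ▸ min_le_right _ _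
    have hzl : a + l • w ∈ X := by
      have : a + l • w = (1 - l) • a + l • z := by
        rw [hw]; module
      rw [this]
      exact hX ha hz (by linarith) (le_of_lt hlpos) (by ring)
    have key := hmin _ hzl
    have e1 : ⟪g, a + l • w⟫ = ⟪g, a⟫ + l * ⟪g, w⟫ := by
      rw [inner_add_right, real_inner_smul_right]
    have e2 : ‖a + l • w - xk‖^2 = ‖a - xk‖^2 + 2 * (l * ⟪a - xk, w⟫) + l^2 * ‖w‖^2 := by
      have h3 : a + l • w - xk = (a - xk) + l • w := by abel
      rw [h3, norm_add_sq_real, real_inner_smul_right, norm_smul, mul_pow,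
        Real.norm_eq_abs, sq_abs]
    rw [e1, e2] at key
    have h2γ : 0 < 2*γ := by linarith
    have hγinv : γ⁻¹ = 2 * (1/(2*γ)) := by field_simp
    rw [hγinv] at hcdef
    have hc2 : 0 ≤ l * c + l^2 * ‖w‖^2 * (1/(2*γ)) := by
      rw [hcdef]; nlinarith [key]
    have hsmall : l * ‖w‖^2 * (1/(2*γ)) ≤ -c/2 := by
      have h := (le_div_iff₀ hwpos).mp hl2
      rw [div_eq_mul_inv (1:ℝ), one_mul, mul_inv_le_iff₀ h2γ] at *
      nlinarith
    nlinarith [hc2, hneg, hlpos, mul_le_mul_of_nonneg_left hsmall hlpos.le,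
      mul_pos hlpos (neg_pos.mpr hneg)]
  have hid : ‖z - xk‖^2 = ‖w‖^2 + 2 * ⟪w, a - xk⟫ + ‖a - xk‖^2 := by
    have h3 : z - xk = w + (a - xk) := by rw [hw]; abel
    rw [h3, norm_add_sq_real]
  have hza : ‖z - a‖^2 = ‖w‖^2 := by rw [hw]
  have hne : ⟪g, a - z⟫ = -⟪g, w⟫ := by
    have h3 : a - z = -w := by rw [hw]; abel
    rw [h3, inner_neg_right]
  have hcomm : ⟪w, a - xk⟫ = ⟪a - xk, w⟫ := real_inner_comm _ _
  rw [hne, hid, hza, hcomm]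
  have heq : 1/(2*γ) * (‖w‖^2 + 2*⟪a-xk,w⟫ + ‖a-xk‖^2 - ‖w‖^2 - ‖a-xk‖^2)
      = γ⁻¹ * ⟪a-xk,w⟫ := by
    field_simp
    ring
  rw [heq]
  linarith

lemma step_ineq {E : Type*} [NormedAddCommGroup E] [InnerProductSpace ℝ E]
    {L MH DX ηv γ : ℝ} (hL : 0 ≤ L) (hMH : 0 ≤ MH) (hDX : 0 < DX) (hη : 0 ≤ ηv)
    (a b c z : E) (Ga Gb Gc : E)
    (hγeq : 1/(2*γ) = 4*L + MH/(2*DX))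
    (hprox : ⟪Gb + (Gb - Gc), a - z⟫ ≤ 1/(2*γ) * (‖z - b‖^2 - ‖z - a‖^2 - ‖a - b‖^2))
    (hlip : ‖Gb - Gc‖ ≤ L * ‖b - c‖ + ηv * MH) :
    ⟪Ga, a - z⟫ ≤ (⟪Ga - Gb, a - z⟫ - 1/(2*γ) * ‖z - a‖^2 - L * ‖a - b‖^2)
      - (⟪Gb - Gc, b - z⟫ - 1/(2*γ) * ‖z - b‖^2 - L * ‖b - c‖^2)
      + ηv^2 * MH * DX / 2 := by
  have split : ⟪Ga, a - z⟫ = ⟪Gb + (Gb - Gc), a - z⟫ + ⟪Ga - Gb, a - z⟫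
      - ⟪Gb - Gc, b - z⟫ - ⟪Gb - Gc, a - b⟫ := by
    simp only [inner_add_left, inner_sub_left, inner_sub_right]
    ring
  have hcs : -⟪Gb - Gc, a - b⟫ ≤ ‖Gb - Gc‖ * ‖a - b‖ := by
    have := abs_real_inner_le_norm (Gb - Gc) (a - b)
    cases abs_le.mp this with
    | intro h1 h2 => linarith
  have hprod : ‖Gb - Gc‖ * ‖a - b‖ ≤ (L * ‖b - c‖ + ηv * MH) * ‖a - b‖ :=
    mul_le_mul_of_nonneg_right hlip (norm_nonneg _)
  have h1 : 0 ≤ L * (‖b - c‖ - ‖a - b‖)^2 := mul_nonneg hL (sq_nonneg _)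
  have h2 : 0 ≤ MH * (‖a - b‖ - ηv * DX)^2 / (2*DX) :=
    div_nonneg (mul_nonneg hMH (sq_nonneg _)) (by linarith)
  have h3 : MH * (‖a - b‖ - ηv * DX)^2 / (2*DX)
      = MH/(2*DX) * ‖a - b‖^2 - ηv * MH * ‖a - b‖ + ηv^2 * MH * DX / 2 := by
    field_simp
    ring
  rw [hγeq] at hprox
  rw [split, hγeq]
  nlinarith [hcs, hprod, h1, h2, h3, sq_nonneg (‖a - b‖)]

set_option maxHeartbeats 2000000 in
/-- **Deterministic rates with smooth inner operator (monotone case).**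
With `F` `L_F`-Lipschitz on `X`, `τ_k = θ_k = 1`, `η = K^{-1/2}`, and
`γ = D_X/(8 D_X (L_F + η L_H) + M_H)`, the averaged iterate `x̄_K` satisfies
`Gap(x̄_K, H, X_F^*) ≤ C D_X (D_X L_F/K^{1/2} + D_X L_H/K + M_H/K^{1/2})` and
`Gap(x̄_K, F, X) ≤ C D_X (D_X L_F/K + D_X L_H/K^{3/2} + M_H/K + C_H/K^{1/2})`. -/
theorem ropex_rates_smooth_inner_monotone :
    ∃ C : ℝ, 0 < C ∧
      ∀ (n : ℕ) (X : Set (EuclideanSpace ℝ (Fin n)))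
        (F H : EuclideanSpace ℝ (Fin n) → EuclideanSpace ℝ (Fin n))
        (LF LH MH CH DX : ℝ) (K : ℕ) (η γ : ℝ)
        (x : ℕ → EuclideanSpace ℝ (Fin n)),
        X.Nonempty → IsCompact X → Convex ℝ X →
        DX = Metric.diam X / 2 → 0 < DX →
        0 ≤ LF → 0 ≤ LH → 0 ≤ MH →
        (∀ a ∈ X, ∀ b ∈ X, 0 ≤ ⟪F a - F b, a - b⟫) →
        (∀ a ∈ X, ∀ b ∈ X, ‖F a - F b‖ ≤ LF * ‖a - b‖) →
        (∀ a ∈ X, ∀ b ∈ X, 0 ≤ ⟪H a - H b, a - b⟫) →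
        (∀ a ∈ X, ∀ b ∈ X, ‖H a - H b‖ ≤ LH * ‖a - b‖ + MH) →
        (∀ a ∈ X, ‖H a‖ ≤ CH) →
        (VISol F X).Nonempty →
        2 ≤ K →
        η = (K : ℝ) ^ (-(1 / 2 : ℝ)) →
        0 < 8 * DX * (LF + η * LH) + MH →
        γ = DX / (8 * DX * (LF + η * LH) + MH) →
        x 0 = x 1 → x 1 ∈ X →
        (∀ k, 1 ≤ k → k ≤ K - 1 → x (k + 1) ∈ X) →
        (∀ k, 1 ≤ k → k ≤ K - 1 → ∀ z ∈ X,
          ⟪F (x k) + η • H (x k)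
              + (F (x k) + η • H (x k) - F (x (k - 1)) - η • H (x (k - 1))), x (k + 1)⟫
              + 1 / (2 * γ) * ‖x (k + 1) - x k‖ ^ 2
            ≤ ⟪F (x k) + η • H (x k)
              + (F (x k) + η • H (x k) - F (x (k - 1)) - η • H (x (k - 1))), z⟫
              + 1 / (2 * γ) * ‖z - x k‖ ^ 2) →
        (Gap H (VISol F X) (((K : ℝ) - 1)⁻¹ • ∑ k ∈ Finset.Icc 1 (K - 1), x (k + 1))
            ≤ ((C * DX * (DX * LF / (K : ℝ) ^ ((1 : ℝ) / 2) + DX * LH / (K : ℝ)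
              + MH / (K : ℝ) ^ ((1 : ℝ) / 2)) : ℝ) : EReal)) ∧
        (Gap F X (((K : ℝ) - 1)⁻¹ • ∑ k ∈ Finset.Icc 1 (K - 1), x (k + 1))
            ≤ ((C * DX * (DX * LF / (K : ℝ) + DX * LH / (K : ℝ) ^ ((3 : ℝ) / 2)
              + MH / (K : ℝ) + CH / (K : ℝ) ^ ((1 : ℝ) / 2)) : ℝ) : EReal)) := by
  refine ⟨100, by norm_num, ?_⟩
  intro n X F H LF LH MH CH DX K η γ x hXne hXcomp hXconv hDX hDXpos hLF hLH hMH
    hFmono hFlip hHmono hHlip hHbd hSol hK hη hden hγ h01 h1X hmemX hmin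
  -- basic scalar facts
  have hKpos : (0:ℝ) < K := by positivity
  have hK2 : (2:ℝ) ≤ (K:ℝ) := by exact_mod_cast hK
  have hKpos' : (0:ℝ) < K := by linarith
  set r : ℝ := (K:ℝ) ^ ((1:ℝ)/2) with hr
  clear_value r
  have hrpos : 0 < r := by rw [hr]; exact Real.rpow_pos_of_pos (by linarith) _
  have hr2 : r * r = (K:ℝ) := by
    rw [hr, ← Real.rpow_add (by linarith)]
    norm_num
  have hr1 : 1 ≤ r := by rw [hr]; exact Real.one_le_rpow (by linarith) (by norm_num)
  have hηinv : η = r⁻¹ := by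
    rw [hη, Real.rpow_neg (le_of_lt hKpos), ← hr]
  have hηpos : 0 < η := by rw [hηinv]; positivity
  have hη1 : η ≤ 1 := by
    rw [hηinv]
    exact inv_le_one_of_one_le₀ hr1
  have h32 : (K:ℝ) ^ ((3:ℝ)/2) = r * (r * r) := by
    rw [show (3:ℝ)/2 = 1/2 + (1/2 + 1/2) by norm_num, Real.rpow_add hKpos,
      Real.rpow_add hKpos, ← hr]
  set L : ℝ := LF + η * LH with hL
  clear_value L
  have hL0 : 0 ≤ L := by
    have := mul_nonneg hηpos.le hLH
    rw [hL]; linarith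
  have hγpos : 0 < γ := by rw [hγ]; exact div_pos hDXpos hden
  have hγeq : 1/(2*γ) = 4*L + MH/(2*DX) := by
    rw [hγ, hL]
    field_simp
    ring
  -- diameter
  have hdiam : ∀ a ∈ X, ∀ b ∈ X, ‖a - b‖ ≤ 2*DX := by
    intro a ha b hb
    have h := Metric.dist_le_diam_of_mem hXcomp.isBounded ha hb
    rw [dist_eq_norm] at h
    rw [hDX] at *
    linarith
  -- membership
  have hmem : ∀ k, 1 ≤ k → k ≤ K → x k ∈ X := by
    intro k hk1 hkK
    match k, hk1 with
    | 1, _ => exact h1X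
    | (m+2), _ =>
      have : m + 2 = (m+1) + 1 := rfl
      rw [this]
      exact hmemX (m+1) (by omega) (by omega)
  -- the combined operator
  set Gv : EuclideanSpace ℝ (Fin n) → EuclideanSpace ℝ (Fin n) :=
    fun v => F v + η • H v with hGv
  clear_value Gv
  have hGlip : ∀ a ∈ X, ∀ b ∈ X, ‖Gv a - Gv b‖ ≤ L * ‖a - b‖ + η * MH := by
    intro a ha b hb
    have hsplit : Gv a - Gv b = (F a - F b) + η • (H a - H b) := by
      rw [hGv]; simp only; module
    rw [hsplit]
    have h1 := norm_add_le (F a - F b) (η • (H a - H b))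
    rw [norm_smul, Real.norm_eq_abs, abs_of_pos hηpos] at h1
    have h2 := hFlip a ha b hb
    have h3 := mul_le_mul_of_nonneg_left (hHlip a ha b hb) hηpos.le
    rw [hL]
    nlinarith
  have hcard : ((K-1 : ℕ) : ℝ) = (K:ℝ) - 1 := by
    have h1K : (1:ℕ) ≤ K := by omega
    push_cast [Nat.cast_sub h1K]
    ring
  have hKm1pos : (0:ℝ) < (K:ℝ) - 1 := by linarith
  -- master sum bound
  have hsum : ∀ z ∈ X, ∑ i ∈ Finset.range (K-1), ⟪Gv (x (i+2)), x (i+2) - z⟫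
      ≤ 20*L*DX^2 + 5*MH*DX := by
    intro z hz
    set Φ : ℕ → ℝ := fun k => ⟪Gv (x k) - Gv (x (k-1)), x k - z⟫
      - 1/(2*γ) * ‖z - x k‖^2 - L * ‖x k - x (k-1)‖^2 with hΦ
    clear_value Φ
    have hstep : ∀ i, i < K - 1 →
        ⟪Gv (x (i+2)), x (i+2) - z⟫ ≤ Φ (i+2) - Φ (i+1) + η^2*MH*DX/2 := by
      intro i hi
      have hk1 : 1 ≤ i+1 := by omega
      have hk2 : i+1 ≤ K-1 := by omega
      have hxi : x i ∈ X := by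
        rcases Nat.eq_zero_or_pos i with h | h
        · rw [h, h01]; exact h1X
        · exact hmem i h (by omega)
      have hxi1 : x (i+1) ∈ X := hmem _ (by omega) (by omega)
      have hxi2 : x (i+2) ∈ X := hmem _ (by omega) (by omega)
      have h3p := prox_ineq hXconv hγpos _ (x (i+1)) (hmemX (i+1) hk1 hk2)
        (hmin (i+1) hk1 hk2) z hz
      simp only [Nat.add_sub_cancel] at h3p
      have hgeq : F (x (i+1)) + η • H (x (i+1))
          + (F (x (i+1)) + η • H (x (i+1)) - F (x i) - η • H (x i))
          = Gv (x (i+1)) + (Gv (x (i+1)) - Gv (x i)) := by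
        rw [hGv]; simp only; abel
      rw [hgeq] at h3p
      have hlip := hGlip (x (i+1)) hxi1 (x i) hxi
      have hres := step_ineq hL0 hMH hDXpos hηpos.le (x (i+2)) (x (i+1)) (x i) z
        (Gv (x (i+2))) (Gv (x (i+1))) (Gv (x i)) hγeq h3p hlip
      have e1 : i + 2 - 1 = i + 1 := by omega
      have e2 : i + 1 - 1 = i := by omega
      simp only [hΦ, e1, e2]
      convert hres using 2
    have htel : ∑ i ∈ Finset.range (K-1), (Φ (i+2) - Φ (i+1)) = Φ K - Φ 1 := by
      have h := Finset.sum_range_sub (fun i => Φ (i+1)) (K-1)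
      rw [show K - 1 + 1 = K from by omega] at h
      exact h
    have hxK : x K ∈ X := hmem K (by omega) le_rfl
    have hxK1 : x (K-1) ∈ X := hmem (K-1) (by omega) (by omega)
    have hc0 : 0 ≤ 4*L + MH/(2*DX) := by
      have : 0 ≤ MH/(2*DX) := div_nonneg hMH (by linarith)
      linarith
    have hΦK : Φ K ≤ (L*(2*DX) + η*MH) * (2*DX) := by
      have hcs := real_inner_le_norm (Gv (x K) - Gv (x (K-1))) (x K - z)
      have hl1 := hGlip (x K) hxK (x (K-1)) hxK1
      have hd1 := hdiam (x K) hxK (x (K-1)) hxK1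
      have hd2 := hdiam (x K) hxK z hz
      have hn1 : (0:ℝ) ≤ ‖Gv (x K) - Gv (x (K-1))‖ := norm_nonneg _
      have hn2 : (0:ℝ) ≤ ‖x K - z‖ := norm_nonneg _
      have hn3 : (0:ℝ) ≤ ‖x K - x (K-1)‖ := norm_nonneg _
      have hbig : ⟪Gv (x K) - Gv (x (K-1)), x K - z⟫ ≤ (L*(2*DX) + η*MH) * (2*DX) := by
        have step1 : ‖Gv (x K) - Gv (x (K-1))‖ * ‖x K - z‖ ≤ (L*(2*DX) + η*MH) * (2*DX) := by
          have hA : ‖Gv (x K) - Gv (x (K-1))‖ ≤ L*(2*DX) + η*MH := by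
            have := mul_le_mul_of_nonneg_left hd1 hL0
            linarith
          apply mul_le_mul hA hd2 hn2
          nlinarith [mul_nonneg hηpos.le hMH, mul_nonneg hL0 hDXpos.le]
        linarith
      have hdrop1 : 0 ≤ 1/(2*γ) * ‖z - x K‖^2 := by
        rw [hγeq]; exact mul_nonneg hc0 (sq_nonneg _)
      have hdrop2 : 0 ≤ L * ‖x K - x (K-1)‖^2 := mul_nonneg hL0 (sq_nonneg _)
      simp only [hΦ]
      linarith
    have hΦ1 : -Φ 1 ≤ (4*L + MH/(2*DX)) * (2*DX)^2 := by
      have hz1 : ‖z - x 1‖ ≤ 2*DX := hdiam z hz (x 1) h1X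
      have e0 : (1:ℕ) - 1 = 0 := rfl
      have hval : Φ 1 = - (1/(2*γ) * ‖z - x 1‖^2) := by
        simp only [hΦ, e0, h01, sub_self, inner_zero_left, norm_zero]
        ring
      rw [hval, hγeq]
      have hsq : ‖z - x 1‖^2 ≤ (2*DX)^2 := by nlinarith [norm_nonneg (z - x 1)]
      nlinarith [mul_le_mul_of_nonneg_left hsq hc0]
    have hη2 : η^2 * (K:ℝ) = 1 := by
      rw [hηinv, ← hr2]
      field_simp
    have hcast : ((K-1:ℕ):ℝ) ≤ (K:ℝ) := by rw [hcard]; linarith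
    have heps : ((K-1:ℕ):ℝ) * (η^2*MH*DX/2) ≤ MH*DX/2 := by
      have h0 : 0 ≤ η^2*MH*DX/2 := by positivity
      have := mul_le_mul_of_nonneg_right hcast h0
      nlinarith [mul_nonneg hMH hDXpos.le]
    have hfin : (L*(2*DX) + η*MH) * (2*DX) + (4*L + MH/(2*DX)) * (2*DX)^2 + MH*DX/2
        ≤ 20*L*DX^2 + 5*MH*DX := by
      have hid : (4*L + MH/(2*DX)) * (2*DX)^2 = 16*L*DX^2 + 2*MH*DX := by
        field_simp
        ring
      rw [hid]
      have : η*MH*(2*DX) ≤ MH*(2*DX) := by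
        nlinarith [mul_nonneg hMH hDXpos.le]
      nlinarith
    calc ∑ i ∈ Finset.range (K-1), ⟪Gv (x (i+2)), x (i+2) - z⟫
        ≤ ∑ i ∈ Finset.range (K-1), (Φ (i+2) - Φ (i+1) + η^2*MH*DX/2) :=
          Finset.sum_le_sum (fun i hi => hstep i (Finset.mem_range.mp hi))
      _ = (Φ K - Φ 1) + ((K-1:ℕ):ℝ) * (η^2*MH*DX/2) := by
          rw [Finset.sum_add_distrib, htel, Finset.sum_const, Finset.card_range,
            nsmul_eq_mul]
      _ ≤ 20*L*DX^2 + 5*MH*DX := by linarith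
  -- average identity
  set xb : EuclideanSpace ℝ (Fin n) :=
    ((K : ℝ) - 1)⁻¹ • ∑ k ∈ Finset.Icc 1 (K - 1), x (k + 1) with hxb
  have hIcc : ∑ k ∈ Finset.Icc 1 (K - 1), x (k + 1) = ∑ i ∈ Finset.range (K-1), x (i+2) := by
    rw [show Finset.Icc 1 (K-1) = Finset.Ico 1 K from by
      rw [← Finset.Ico_add_one_right_eq_Icc]; congr 1; omega, Finset.sum_Ico_eq_sum_range]
    refine Finset.sum_congr rfl fun i _ => ?_
    have : 1 + i + 1 = i + 2 := by omega
    rw [this]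
  have havg : ∀ v y : EuclideanSpace ℝ (Fin n),
      ⟪v, xb - y⟫ = ((K:ℝ)-1)⁻¹ * ∑ i ∈ Finset.range (K-1), ⟪v, x (i+2) - y⟫ := by
    intro v y
    have hS : xb - y = ((K:ℝ)-1)⁻¹ • (∑ i ∈ Finset.range (K-1), (x (i+2) - y)) := by
      rw [Finset.sum_sub_distrib, Finset.sum_const, Finset.card_range, smul_sub,
        hxb, hIcc]
      congr 1
      rw [← Nat.cast_smul_eq_nsmul ℝ, smul_smul, hcard,
        inv_mul_cancel₀ (ne_of_gt hKm1pos), one_smul]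
    rw [hS, real_inner_smul_right, inner_sum]
  have hCH0 : 0 ≤ CH := le_trans (norm_nonneg _) (hHbd _ h1X)
  have hB0 : 0 ≤ 20*L*DX^2+5*MH*DX := by
    nlinarith [mul_nonneg hL0 (sq_nonneg DX), mul_nonneg hMH hDXpos.le]
  have hrr1 : (0:ℝ) < r*r - 1 := by nlinarith [hr2, hK2]
  have hinv2 : (r*r-1)⁻¹ ≤ 2/(r*r) := by
    have h : r*r/2 ≤ r*r - 1 := by nlinarith
    calc (r*r-1)⁻¹ ≤ (r*r/2)⁻¹ := inv_anti₀ (by nlinarith) h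
      _ = 2/(r*r) := by rw [inv_div]
  have hrne : r ≠ 0 := ne_of_gt hrpos
  have hGsplit : ∀ a y : EuclideanSpace ℝ (Fin n), ⟪Gv a, a - y⟫
      = ⟪F a, a - y⟫ + η * ⟪H a, a - y⟫ := by
    intro a y
    rw [hGv]
    simp only
    rw [inner_add_left, real_inner_smul_left]
  constructor
  · -- Gap H bound
    unfold Gap
    refine iSup₂_le fun y hy => ?_
    obtain ⟨hyX, hyVI⟩ := hy
    rw [EReal.coe_le_coe_iff]
    have hsum' := hsum y hyX
    have hHstep : ∀ i ∈ Finset.range (K-1),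
        η * ⟪H (x (i+2)), x (i+2) - y⟫ ≤ ⟪Gv (x (i+2)), x (i+2) - y⟫ := by
      intro i hi
      have hi' := Finset.mem_range.mp hi
      have hxX : x (i+2) ∈ X := hmem _ (by omega) (by omega)
      have hF1 : 0 ≤ ⟪F y, x (i+2) - y⟫ := hyVI _ hxX
      have hF2 := hFmono _ hxX y hyX
      rw [inner_sub_left] at hF2
      rw [hGsplit]
      linarith
    have hHmono' : ∀ i ∈ Finset.range (K-1),
        ⟪H y, x (i+2) - y⟫ ≤ ⟪H (x (i+2)), x (i+2) - y⟫ := by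
      intro i hi
      have hi' := Finset.mem_range.mp hi
      have hxX : x (i+2) ∈ X := hmem _ (by omega) (by omega)
      have h := hHmono _ hxX y hyX
      rw [inner_sub_left] at h
      linarith
    have hHsum : η * ∑ i ∈ Finset.range (K-1), ⟪H (x (i+2)), x (i+2) - y⟫
        ≤ 20*L*DX^2 + 5*MH*DX := by
      rw [Finset.mul_sum]
      exact le_trans (Finset.sum_le_sum hHstep) hsum'
    have hsum2 : ∑ i ∈ Finset.range (K-1), ⟪H y, x (i+2) - y⟫
        ≤ (20*L*DX^2 + 5*MH*DX) / η := by
      rw [le_div_iff₀ hηpos]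
      calc (∑ i ∈ Finset.range (K-1), ⟪H y, x (i+2) - y⟫) * η
          = η * ∑ i ∈ Finset.range (K-1), ⟪H y, x (i+2) - y⟫ := mul_comm _ _
        _ ≤ η * ∑ i ∈ Finset.range (K-1), ⟪H (x (i+2)), x (i+2) - y⟫ :=
            mul_le_mul_of_nonneg_left (Finset.sum_le_sum hHmono') hηpos.le
        _ ≤ _ := hHsum
    rw [havg (H y) y]
    have h2 : ((K:ℝ)-1)⁻¹ * ∑ i ∈ Finset.range (K-1), ⟪H y, x (i+2) - y⟫
        ≤ ((K:ℝ)-1)⁻¹ * ((20*L*DX^2 + 5*MH*DX)/η) :=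
      mul_le_mul_of_nonneg_left hsum2 (inv_nonneg.mpr hKm1pos.le)
    refine le_trans h2 ?_
    rw [hηinv, div_inv_eq_mul, show (K:ℝ)-1 = r*r-1 from by rw [hr2], ← hr2]
    have hBr0 : 0 ≤ (20*L*DX^2+5*MH*DX)*r := mul_nonneg hB0 hrpos.le
    calc (r*r-1)⁻¹ * ((20*L*DX^2+5*MH*DX)*r)
        ≤ (2/(r*r)) * ((20*L*DX^2+5*MH*DX)*r) := mul_le_mul_of_nonneg_right hinv2 hBr0
      _ ≤ 100*DX*(DX*LF/r + DX*LH/(r*r) + MH/r) := by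
          rw [hL, hηinv]
          have hexp : (2/(r*r)) * ((20*(LF + r⁻¹*LH)*DX^2+5*MH*DX)*r)
              = 40*(DX^2*LF/r) + 40*(DX^2*LH/(r*r)) + 10*(DX*MH/r) := by
            field_simp
            ring
          have hRHS : 100*DX*(DX*LF/r + DX*LH/(r*r) + MH/r)
              = 100*(DX^2*LF/r) + 100*(DX^2*LH/(r*r)) + 100*(DX*MH/r) := by
            field_simp
          rw [hexp, hRHS]
          have p1 : 0 ≤ DX^2*LF/r := div_nonneg (mul_nonneg (sq_nonneg DX) hLF) hrpos.le
          have p2 : 0 ≤ DX^2*LH/(r*r) :=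
            div_nonneg (mul_nonneg (sq_nonneg DX) hLH) (by positivity)
          have p3 : 0 ≤ DX*MH/r := div_nonneg (mul_nonneg hDXpos.le hMH) hrpos.le
          linarith
  · -- Gap F bound
    unfold Gap
    refine iSup₂_le fun y hyX => ?_
    rw [EReal.coe_le_coe_iff]
    have hsum' := hsum y hyX
    have hFstep : ∀ i ∈ Finset.range (K-1),
        ⟪F y, x (i+2) - y⟫ ≤ ⟪Gv (x (i+2)), x (i+2) - y⟫ + η * (2*CH*DX) := by
      intro i hi
      have hi' := Finset.mem_range.mp hi
      have hxX : x (i+2) ∈ X := hmem _ (by omega) (by omega)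
      have hF2 := hFmono _ hxX y hyX
      rw [inner_sub_left] at hF2
      have habs := abs_le.mp (abs_real_inner_le_norm (H (x (i+2))) (x (i+2) - y))
      have hHb := hHbd _ hxX
      have hdb := hdiam _ hxX y hyX
      have hprod : ‖H (x (i+2))‖ * ‖x (i+2) - y‖ ≤ CH * (2*DX) :=
        mul_le_mul hHb hdb (norm_nonneg _) hCH0
      have hineq : -⟪H (x (i+2)), x (i+2) - y⟫ ≤ CH*(2*DX) := by linarith [habs.1]
      have hmul := mul_le_mul_of_nonneg_left hineq hηpos.le
      rw [hGsplit]
      nlinarith [hmul, hF2]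
    have hsum3 : ∑ i ∈ Finset.range (K-1), ⟪F y, x (i+2) - y⟫
        ≤ (20*L*DX^2+5*MH*DX) + ((K-1:ℕ):ℝ) * (η*(2*CH*DX)) := by
      calc ∑ i ∈ Finset.range (K-1), ⟪F y, x (i+2) - y⟫
          ≤ ∑ i ∈ Finset.range (K-1), (⟪Gv (x (i+2)), x (i+2) - y⟫ + η*(2*CH*DX)) :=
            Finset.sum_le_sum hFstep
        _ = (∑ i ∈ Finset.range (K-1), ⟪Gv (x (i+2)), x (i+2) - y⟫)
            + ((K-1:ℕ):ℝ)*(η*(2*CH*DX)) := by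
            rw [Finset.sum_add_distrib, Finset.sum_const, Finset.card_range, nsmul_eq_mul]
        _ ≤ _ := by linarith [hsum']
    rw [havg (F y) y]
    have h2 : ((K:ℝ)-1)⁻¹ * ∑ i ∈ Finset.range (K-1), ⟪F y, x (i+2) - y⟫
        ≤ ((K:ℝ)-1)⁻¹ * ((20*L*DX^2+5*MH*DX) + ((K-1:ℕ):ℝ) * (η*(2*CH*DX))) :=
      mul_le_mul_of_nonneg_left hsum3 (inv_nonneg.mpr hKm1pos.le)
    refine le_trans h2 ?_
    rw [hcard]
    have hsplit : ((K:ℝ)-1)⁻¹ * ((20*L*DX^2+5*MH*DX) + ((K:ℝ)-1)*(η*(2*CH*DX)))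
        = ((K:ℝ)-1)⁻¹ * (20*L*DX^2+5*MH*DX) + η*(2*CH*DX) := by
      field_simp
    rw [hsplit, h32, hηinv, show (K:ℝ)-1 = r*r-1 from by rw [hr2], ← hr2]
    have hb1 : (r*r-1)⁻¹ * (20*L*DX^2+5*MH*DX) ≤ (2/(r*r)) * (20*L*DX^2+5*MH*DX) :=
      mul_le_mul_of_nonneg_right hinv2 hB0
    refine le_trans (by linarith : (r*r-1)⁻¹ * (20*L*DX^2+5*MH*DX) + r⁻¹*(2*CH*DX)
      ≤ (2/(r*r)) * (20*L*DX^2+5*MH*DX) + r⁻¹*(2*CH*DX)) ?_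
    rw [hL, hηinv]
    have hexp : (2/(r*r)) * (20*(LF + r⁻¹*LH)*DX^2+5*MH*DX) + r⁻¹*(2*CH*DX)
        = 40*(DX^2*LF/(r*r)) + 40*(DX^2*LH/(r*(r*r))) + 10*(DX*MH/(r*r))
          + 2*(DX*CH/r) := by
      field_simp
      ring
    have hRHS : 100*DX*(DX*LF/(r*r) + DX*LH/(r*(r*r)) + MH/(r*r) + CH/r)
        = 100*(DX^2*LF/(r*r)) + 100*(DX^2*LH/(r*(r*r))) + 100*(DX*MH/(r*r))
          + 100*(DX*CH/r) := by
      field_simp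
    rw [hexp, hRHS]
    have p1 : 0 ≤ DX^2*LF/(r*r) := div_nonneg (mul_nonneg (sq_nonneg DX) hLF) (by positivity)
    have p2 : 0 ≤ DX^2*LH/(r*(r*r)) :=
      div_nonneg (mul_nonneg (sq_nonneg DX) hLH) (by positivity)
    have p3 : 0 ≤ DX*MH/(r*r) := div_nonneg (mul_nonneg hDXpos.le hMH) (by positivity)
    have p4 : 0 ≤ DX*CH/r := div_nonneg (mul_nonneg hDXpos.le hCH0) hrpos.le
    linarith
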